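/- Let L be a finite lattice, let ⊥ = x_0 < x_1 < ⋯ < x_k = ⊤ be a chain of left modular elements of L, and let w ≤ z in L. Suppose c satisfies w ≤ c < z, let i be an index with c ⊔ (x_i ⊓ z) = c and c ⊔ (x_{i+1} ⊓ z) ≠ c, and set c' = c ⊔ (x_{i+1} ⊓ z). Then for every cover relation y ⋖ y' with c ≤ y and y' ≤ c', one has x_{i+1} ⊔ y = x_{i+1} ⊔ y', x_i ⊔ y ≠ x_i ⊔ y', and x_i ⊓ y = x_i ⊓ y'; in particular, y ⋖ y' is weakly separated by x_{i+1}/x_i. -/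

import Mathlib

/-- Let `⊥ = x₀ < x₁ < ⋯ < x_k = ⊤` be a chain of left modular elements of a
finite lattice `L`, let `w ≤ z`, and let `w ≤ c < z`.  Suppose `i` is an index
with `c ⊔ (x_i ⊓ z) = c` and `c ⊔ (x_{i+1} ⊓ z) ≠ c`, and set
`c' = c ⊔ (x_{i+1} ⊓ z)`.  Then every cover relation `y ⋖ y'` with `c ≤ y` and
`y' ≤ c'` satisfies `x_{i+1} ⊔ y = x_{i+1} ⊔ y'`, `x_i ⊔ y ≠ x_i ⊔ y'`, and
`x_i ⊓ y = x_i ⊓ y'`; in particular it is weakly separated by `x_{i+1}/x_i`. -/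
theorem covers_in_step_weaklySeparated {L : Type*} [Lattice L]
    [BoundedOrder L] [Fintype L] {k : ℕ} (x : Fin (k + 1) → L)
    (hmono : StrictMono x) (hbot : x 0 = ⊥) (htop : x (Fin.last k) = ⊤)
    (hlm : ∀ i : Fin (k + 1), ∀ y z : L, y ≤ z →
      (y ⊔ x i) ⊓ z = y ⊔ (x i ⊓ z))
    (w z : L) (hwz : w ≤ z) (c : L) (hwc : w ≤ c) (hcz : c < z)
    (i : Fin k)
    (hi : c ⊔ (x i.castSucc ⊓ z) = c)
    (hi' : c ⊔ (x i.succ ⊓ z) ≠ c) :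
    ∀ y y' : L, y ⋖ y' → c ≤ y → y' ≤ c ⊔ (x i.succ ⊓ z) →
      x i.succ ⊔ y = x i.succ ⊔ y' ∧
      x i.castSucc ⊔ y ≠ x i.castSucc ⊔ y' ∧
      x i.castSucc ⊓ y = x i.castSucc ⊓ y' := by
  intro y y' hyy hcy hy'
  set a := x i.castSucc with ha
  set b := x i.succ with hb
  have haz : a ⊓ z ≤ c := hi ▸ le_sup_right
  have hc'z : c ⊔ (b ⊓ z) ≤ z := sup_le hcz.le inf_le_right
  have hyz : y ≤ z := le_trans hyy.le (le_trans hy' hc'z)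
  have h1 : b ⊔ y = b ⊔ y' := by
    refine le_antisymm (sup_le_sup_left hyy.le _) ?_
    exact sup_le le_sup_left (le_trans hy' (sup_le (le_trans hcy le_sup_right)
      (le_trans inf_le_left le_sup_left)))
  have h2 : a ⊔ y ≠ a ⊔ y' := by
    intro h
    have : y' ≤ (y ⊔ a) ⊓ z :=
      le_inf (le_trans (h ▸ le_sup_right : y' ≤ a ⊔ y) (by rw [sup_comm])) (le_trans hy' hc'z)
    rw [hlm _ y z hyz] at this
    have : y' ≤ y := le_trans this (sup_le le_rfl (le_trans haz hcy))
    exact absurd this (not_le_of_gt hyy.lt)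
  have h3 : a ⊓ y = a ⊓ y' := by
    refine le_antisymm (inf_le_inf_left _ hyy.le) ?_
    refine le_inf inf_le_left ?_
    have : a ⊓ y' ≤ (c ⊔ a) ⊓ z :=
      le_inf (le_trans inf_le_left le_sup_right) (le_trans inf_le_right (le_trans hy' hc'z))
    rw [hlm _ c z hcz.le, hi] at this
    exact le_trans this hcy
  exact ⟨h1, h2, h3⟩
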